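/- arXiv:1902.00491 — 4 statements merged into one kernel-verified Lean document; each statement's English description precedes it below -/
import Mathlib

section
/- For the generalized ReLU f with parameters 0 < a ≤ b, for all x, y ∈ ℝ we have (f(x) - f(y))·(x - y) ≥ (1/b)·(f(x) - f(y))². -/
theorem genReLU_cocoercive (a b : ℝ) (ha : 0 < a) (hab : a ≤ b)
    (f : ℝ → ℝ) (hf : ∀ x, f x = if x ≤ 0 then a * x else b * x) :
    ∀ x y : ℝ, (f x - f y) * (x - y) ≥ (1 / b) * (f x - f y) ^ 2 := by
  have hb : 0 < b := lt_of_lt_of_le ha hab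
  intro x y
  rw [ge_iff_le, div_mul_eq_mul_div, div_le_iff₀ hb]
  rw [hf x, hf y]
  by_cases hx : x ≤ 0 <;> by_cases hy : y ≤ 0 <;> simp [hx, hy] <;> (try push_neg at *)
  · nlinarith [mul_nonneg ha.le (sq_nonneg (x - y))]
  · nlinarith [mul_nonneg (mul_nonneg (sub_nonneg.2 hab) (neg_nonneg.2 hx))
      (sub_nonneg.2 (le_trans (mul_nonpos_of_nonneg_of_nonpos ha.le hx) (mul_nonneg hb.le hy.le)))]
  · nlinarith [mul_nonneg (mul_nonneg (sub_nonneg.2 hab) (neg_nonneg.2 hy))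
      (sub_nonneg.2 (le_trans (mul_nonpos_of_nonneg_of_nonpos ha.le hy) (mul_nonneg hb.le hx.le)))]
  · nlinarith [sq_nonneg (x - y)]
end

section
/- In the idealized GLM with generalized ReLU activation, the empirical error ê(w) = (1/m)∑ᵢ (yᵢ - φ⟨w, xᵢ⟩)² with yᵢ = φ⟨w*, xᵢ⟩ is (ε, 2b³W/a, w*)-SLQC in w for all w in the ball of radius W and all ε > 0: if ê(w) ≥ ε, then for every v with ‖v - w*‖ ≤ εa/(2b³W), the gradient G(w) of ê satisfies ⟨G(w), w - v⟩ ≥ 0. -/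
open RealInnerProductSpace

set_option maxHeartbeats 1000000 in
theorem slqc_scalar_key (a b W ε R : ℝ) (ha : 0 < a) (hab : a ≤ b) (hW : 0 < W)
    (hε : 0 < ε) (hR : 2 * b ^ 3 * W * R = ε * a)
    (φ g : ℝ → ℝ)
    (hφ : ∀ t, φ t = if t ≤ 0 then a * t else b * t)
    (hg : ∀ t, g t = if t < 0 then a else b)
    (t s u : ℝ) (hts : |t - s| ≤ 2 * W) (hsu : |s - u| ≤ R) :
    a * ((φ s - φ t) ^ 2 - ε) ≤ b * (g t * (φ t - φ s) * (t - u)) := by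
  have hb : 0 < b := lt_of_lt_of_le ha hab
  have hR0 : 0 ≤ R := by
    nlinarith [mul_pos hε ha, (by positivity : (0:ℝ) < 2 * b ^ 3 * W)]
  have hmono : (φ t - φ s) ^ 2 ≤ b * ((φ t - φ s) * (t - s)) := by
    rw [hφ t, hφ s]
    split_ifs with h1 h2 h2
    · nlinarith [sq_nonneg (t - s)]
    · nlinarith [mul_nonneg (by nlinarith : (0:ℝ) ≤ b*s - a*t)
        (by nlinarith : (0:ℝ) ≤ t*(a-b))]
    · nlinarith [mul_nonneg (by nlinarith : (0:ℝ) ≤ b*t - a*s)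
        (by nlinarith : (0:ℝ) ≤ s*(a-b))]
    · nlinarith [sq_nonneg (t - s)]
  have hlip : |φ t - φ s| ≤ b * |t - s| := by
    rw [hφ t, hφ s, abs_le]
    have h1 := le_abs_self (t - s)
    have h2 := neg_abs_le (t - s)
    constructor <;> (split_ifs with ht hs hs <;> nlinarith)
  have hga : a ≤ g t := by rw [hg]; split_ifs <;> linarith
  have hgb : g t ≤ b := by rw [hg]; split_ifs <;> linarith
  set e : ℝ := φ t - φ s with he
  have heabs : |e| ≤ 2 * b * W := by
    calc |e| ≤ b * |t - s| := hlip
      _ ≤ b * (2 * W) := by apply mul_le_mul_of_nonneg_left hts hb.le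
      _ = 2 * b * W := by ring
  have hcross : -(2 * b * W * R) ≤ e * (s - u) := by
    have h1 : |e * (s - u)| ≤ 2 * b * W * R := by
      rw [abs_mul]
      exact mul_le_mul heabs hsu (abs_nonneg _) (by positivity)
    nlinarith [neg_abs_le (e * (s - u))]
  have hpos : 0 ≤ e * (t - s) := by nlinarith [sq_nonneg e]
  have hdecomp : g t * e * (t - u) = g t * (e * (t - s)) + g t * (e * (s - u)) := by ring
  have h1 : a * (e * (t - s)) ≤ g t * (e * (t - s)) := mul_le_mul_of_nonneg_right hga hpos
  have h2 : a * e ^ 2 ≤ b * (a * (e * (t - s))) := by nlinarith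
  have h3 : -(b * b * (2 * b * W * R)) ≤ b * (g t * (e * (s - u))) := by
    rcases le_or_gt 0 (e * (s - u)) with h | h
    · have hrhs : 0 ≤ b * (g t * (e * (s - u))) :=
        mul_nonneg hb.le (mul_nonneg (le_trans ha.le hga) h)
      have hlhs : 0 ≤ b * b * (2 * b * W * R) :=
        mul_nonneg (mul_nonneg hb.le hb.le) (mul_nonneg (by positivity) hR0)
      linarith
    · have hx1 : b * (e * (s - u)) ≤ g t * (e * (s - u)) := by
        nlinarith [mul_nonneg (sub_nonneg.mpr hgb) (le_of_lt (neg_pos.mpr h))]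
      have hA := mul_le_mul_of_nonneg_left hcross (mul_nonneg hb.le hb.le)
      have hB := mul_le_mul_of_nonneg_left hx1 hb.le
      nlinarith
  have h4 : b * b * (2 * b * W * R) = ε * a := by linarith [hR]
  have hsq : (φ s - φ t) ^ 2 = e ^ 2 := by rw [he]; ring
  rw [hsq, hdecomp]
  have h5 := mul_le_mul_of_nonneg_left h1 hb.le
  nlinarith

set_option maxHeartbeats 1000000 in
theorem glm_genReLU_slqc (d m : ℕ) (hm : 0 < m) (a b W ε : ℝ)
    (ha : 0 < a) (hab : a ≤ b) (hW : 0 < W) (hε : 0 < ε)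
    (φ g : ℝ → ℝ)
    (hφ : ∀ t, φ t = if t ≤ 0 then a * t else b * t)
    (hg : ∀ t, g t = if t < 0 then a else b)
    (x : Fin m → EuclideanSpace ℝ (Fin d)) (hx : ∀ i, ‖x i‖ ≤ 1)
    (wstar w : EuclideanSpace ℝ (Fin d)) (hwstar : ‖wstar‖ ≤ W) (hw : ‖w‖ ≤ W)
    (y : Fin m → ℝ) (hy : ∀ i, y i = φ ⟪wstar, x i⟫)
    (herr : (1 / (m : ℝ)) * ∑ i, (y i - φ ⟪w, x i⟫) ^ 2 ≥ ε)
    (v : EuclideanSpace ℝ (Fin d)) (hv : ‖v - wstar‖ ≤ ε * a / (2 * b ^ 3 * W)) :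
    ⟪(2 / (m : ℝ)) • ∑ i, (g ⟪w, x i⟫ * (φ ⟪w, x i⟫ - y i)) • x i, w - v⟫ ≥ 0 := by
  have hb : 0 < b := lt_of_lt_of_le ha hab
  set R : ℝ := ε * a / (2 * b ^ 3 * W) with hRdef
  have hRval : 2 * b ^ 3 * W * R = ε * a := by
    rw [hRdef]; field_simp
  have key : ∀ i, a * ((y i - φ ⟪w, x i⟫) ^ 2 - ε) ≤
      b * (g ⟪w, x i⟫ * (φ ⟪w, x i⟫ - y i) * ⟪x i, w - v⟫) := by
    intro i
    have hts2 : |⟪w, x i⟫ - ⟪wstar, x i⟫| ≤ 2 * W := by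
      have heq : ⟪w, x i⟫ - ⟪wstar, x i⟫ = ⟪w - wstar, x i⟫ := (inner_sub_left _ _ _).symm
      rw [heq]
      calc |⟪w - wstar, x i⟫| ≤ ‖w - wstar‖ * ‖x i‖ := abs_real_inner_le_norm _ _
        _ ≤ (‖w‖ + ‖wstar‖) * 1 :=
            mul_le_mul (norm_sub_le _ _) (hx i) (norm_nonneg _) (by positivity)
        _ ≤ 2 * W := by linarith
    have hsu : |⟪wstar, x i⟫ - ⟪v, x i⟫| ≤ R := by
      have heq : ⟪wstar, x i⟫ - ⟪v, x i⟫ = ⟪wstar - v, x i⟫ := (inner_sub_left _ _ _).symm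
      rw [heq]
      calc |⟪wstar - v, x i⟫| ≤ ‖wstar - v‖ * ‖x i‖ := abs_real_inner_le_norm _ _
        _ ≤ R * 1 := by
            refine mul_le_mul ?_ (hx i) (norm_nonneg _) (by positivity)
            rw [norm_sub_rev]; exact hv
        _ = R := mul_one _
    have hiwv : ⟪x i, w - v⟫ = ⟪w, x i⟫ - ⟪v, x i⟫ := by
      rw [inner_sub_right, real_inner_comm (x i) w, real_inner_comm (x i) v]
    rw [hiwv, hy i]
    exact slqc_scalar_key a b W ε R ha hab hW hε hRval φ g hφ hg _ _ _ hts2 hsu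
  have hm' : (0:ℝ) < m := by exact_mod_cast hm
  have herr' : (m:ℝ) * ε ≤ ∑ i, (y i - φ ⟪w, x i⟫) ^ 2 := by
    rw [ge_iff_le, one_div, inv_mul_eq_div, le_div_iff₀ hm'] at herr
    linarith
  have hsum : 0 ≤ ∑ i, g ⟪w, x i⟫ * (φ ⟪w, x i⟫ - y i) * ⟪x i, w - v⟫ := by
    have hsum1 : ∑ i, a * ((y i - φ ⟪w, x i⟫) ^ 2 - ε) ≤
        ∑ i, b * (g ⟪w, x i⟫ * (φ ⟪w, x i⟫ - y i) * ⟪x i, w - v⟫) :=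
      Finset.sum_le_sum fun i _ => key i
    have hl : ∑ i, a * ((y i - φ ⟪w, x i⟫) ^ 2 - ε)
        = a * ((∑ i, (y i - φ ⟪w, x i⟫) ^ 2) - (m : ℝ) * ε) := by
      simp only [mul_sub, Finset.sum_sub_distrib, Finset.sum_const, Finset.card_univ,
        Fintype.card_fin, nsmul_eq_mul, Finset.mul_sum]
      ring
    have hr : ∑ i, b * (g ⟪w, x i⟫ * (φ ⟪w, x i⟫ - y i) * ⟪x i, w - v⟫)
        = b * ∑ i, g ⟪w, x i⟫ * (φ ⟪w, x i⟫ - y i) * ⟪x i, w - v⟫ :=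
      (Finset.mul_sum _ _ _).symm
    rw [hl, hr] at hsum1
    have h0 : 0 ≤ a * ((∑ i, (y i - φ ⟪w, x i⟫) ^ 2) - (m : ℝ) * ε) := by
      apply mul_nonneg ha.le; linarith
    have hbT : 0 ≤ b * ∑ i, g ⟪w, x i⟫ * (φ ⟪w, x i⟫ - y i) * ⟪x i, w - v⟫ :=
      le_trans h0 hsum1
    nlinarith [hbT, hb]
  rw [real_inner_smul_left, sum_inner]
  have hsums : ∑ i, ⟪(g ⟪w, x i⟫ * (φ ⟪w, x i⟫ - y i)) • x i, w - v⟫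
      = ∑ i, g ⟪w, x i⟫ * (φ ⟪w, x i⟫ - y i) * ⟪x i, w - v⟫ := by
    refine Finset.sum_congr rfl fun i _ => ?_
    rw [real_inner_smul_left]
  rw [hsums, ge_iff_le]
  exact mul_nonneg (by positivity) hsum
end

section
/- Key gradient inequality for generalized ReLU GLM: under the idealized GLM setup, if ê(w) ≥ ε and ‖v - w*‖ ≤ εa/(2b³W), then ⟨G(w), w - v⟩ ≥ (a/b)·ε·(2 - ‖w - w*‖/W) ≥ 0. -/
open RealInnerProductSpace

private lemma glm_aux_key1 (a b : ℝ) (ha : 0 < a) (hab : a ≤ b)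
    (φ g : ℝ → ℝ)
    (hφ : ∀ t, φ t = if t ≤ 0 then a * t else b * t)
    (hg : ∀ t, g t = if t < 0 then a else b) :
    ∀ s t : ℝ, a / b * (φ s - φ t) ^ 2 ≤ g s * (φ s - φ t) * (s - t) := by
  have hb : 0 < b := lt_of_lt_of_le ha hab
  intro s t
  rw [div_mul_eq_mul_div, div_le_iff₀ hb, hφ s, hφ t, hg s]
  rcases lt_trichotomy s 0 with hs | hs | hs
  · rw [if_pos hs, if_pos hs.le]
    split_ifs with ht
    · nlinarith [mul_nonneg (mul_nonneg ha.le (mul_nonneg ha.le (sub_nonneg.2 hab)))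
        (sq_nonneg (s - t))]
    · have h1 : (0:ℝ) ≤ b*t - a*s := by nlinarith
      have h2 : b*t - a*s ≤ b*(t-s) := by nlinarith
      nlinarith [mul_nonneg (mul_nonneg ha.le h1) (sub_nonneg.2 h2)]
  · subst hs
    simp only [le_refl, if_true, lt_irrefl, if_false, mul_zero, zero_sub, zero_mul]
    split_ifs with ht
    · nlinarith [mul_nonneg (mul_nonneg (mul_nonneg ha.le (sub_nonneg.2 hab))
        (by linarith : (0:ℝ) ≤ a + b)) (sq_nonneg t)]
    · nlinarith [mul_nonneg (mul_nonneg (mul_nonneg hb.le hb.le) (sub_nonneg.2 hab))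
        (sq_nonneg t)]
  · rw [if_neg (not_lt.2 hs.le), if_neg (not_le.2 hs)]
    split_ifs with ht
    · have h1 : (0:ℝ) ≤ b*s - a*t := by nlinarith
      have h2 : b*s - a*t ≤ b*(s-t) := by nlinarith
      nlinarith [mul_nonneg (mul_nonneg hb.le h1) (sub_nonneg.2 h2),
        mul_nonneg (sub_nonneg.2 hab) (sq_nonneg (b*s - a*t))]
    · nlinarith [mul_nonneg (mul_nonneg (mul_nonneg hb.le hb.le) (sub_nonneg.2 hab))
        (sq_nonneg (s - t))]

private lemma glm_aux_key2 (a b : ℝ) (ha : 0 < a) (hab : a ≤ b)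
    (φ : ℝ → ℝ)
    (hφ : ∀ t, φ t = if t ≤ 0 then a * t else b * t) :
    ∀ s t : ℝ, |φ s - φ t| ≤ b * |s - t| := by
  intro s t
  rw [abs_le, hφ s, hφ t]
  constructor <;> split_ifs <;>
    nlinarith [le_abs_self (s - t), neg_abs_le (s - t), abs_nonneg (s - t)]

set_option maxHeartbeats 1000000 in
theorem glm_genReLU_gradient_inequality (d m : ℕ) (hm : 0 < m) (a b W ε : ℝ)
    (ha : 0 < a) (hab : a ≤ b) (hW : 0 < W) (hε : 0 < ε)
    (φ g : ℝ → ℝ)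
    (hφ : ∀ t, φ t = if t ≤ 0 then a * t else b * t)
    (hg : ∀ t, g t = if t < 0 then a else b)
    (x : Fin m → EuclideanSpace ℝ (Fin d)) (hx : ∀ i, ‖x i‖ ≤ 1)
    (wstar w : EuclideanSpace ℝ (Fin d)) (hwstar : ‖wstar‖ ≤ W) (hw : ‖w‖ ≤ W)
    (y : Fin m → ℝ) (hy : ∀ i, y i = φ ⟪wstar, x i⟫)
    (herr : (1 / (m : ℝ)) * ∑ i, (y i - φ ⟪w, x i⟫) ^ 2 ≥ ε)
    (v : EuclideanSpace ℝ (Fin d)) (hv : ‖v - wstar‖ ≤ ε * a / (2 * b ^ 3 * W)) :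
    ⟪(2 / (m : ℝ)) • ∑ i, (g ⟪w, x i⟫ * (φ ⟪w, x i⟫ - y i)) • x i, w - v⟫
      ≥ (a / b) * ε * (2 - ‖w - wstar‖ / W) ∧
    (a / b) * ε * (2 - ‖w - wstar‖ / W) ≥ 0 := by
  have hb : 0 < b := lt_of_lt_of_le ha hab
  have hmR : (0:ℝ) < m := by exact_mod_cast hm
  set D := ‖w - wstar‖ with hDdef
  have hDnn : 0 ≤ D := norm_nonneg _
  have hD2 : D ≤ 2 * W := by
    calc D ≤ ‖w‖ + ‖wstar‖ := norm_sub_le _ _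
    _ ≤ 2 * W := by linarith
  have hfrac : 2 - D / W ≥ 0 := by
    rw [ge_iff_le, sub_nonneg, div_le_iff₀ hW]; linarith
  refine ⟨?_, mul_nonneg (mul_nonneg (by positivity) hε.le) hfrac⟩
  set δ := ‖v - wstar‖ with hδdef
  have hδnn : 0 ≤ δ := norm_nonneg _
  -- pointwise key inequality
  have key1 : ∀ s t : ℝ, a / b * (φ s - φ t) ^ 2 ≤ g s * (φ s - φ t) * (s - t) :=
    glm_aux_key1 a b ha hab φ g hφ hg
  -- Lipschitz bound for φ
  have key2 : ∀ s t : ℝ, |φ s - φ t| ≤ b * |s - t| := glm_aux_key2 a b ha hab φ hφ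
  have keyg : ∀ s : ℝ, |g s| ≤ b := by
    intro s; rw [hg s]; split_ifs
    · rw [abs_of_pos ha]; exact hab
    · rw [abs_of_pos hb]
  set s : Fin m → ℝ := fun i => ⟪w, x i⟫ with hs
  set t : Fin m → ℝ := fun i => ⟪wstar, x i⟫ with ht
  set c : Fin m → ℝ := fun i => g (s i) * (φ (s i) - y i) with hc
  have hinner : ⟪(2 / (m : ℝ)) • ∑ i, c i • x i, w - v⟫
      = (2 / (m:ℝ)) * ∑ i, c i * ⟪x i, w - v⟫ := by
    rw [real_inner_smul_left, sum_inner]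
    simp_rw [real_inner_smul_left]
  rw [hinner]
  have hst : ∀ i, |s i - t i| ≤ D := by
    intro i
    have h : s i - t i = ⟪w - wstar, x i⟫ := by rw [inner_sub_left]
    rw [h]
    calc |⟪w - wstar, x i⟫| ≤ ‖w - wstar‖ * ‖x i‖ := abs_real_inner_le_norm _ _
    _ ≤ D * 1 := mul_le_mul_of_nonneg_left (hx i) hDnn
    _ = D := mul_one _
  have hxv : ∀ i, |⟪x i, wstar - v⟫| ≤ δ := by
    intro i
    calc |⟪x i, wstar - v⟫| ≤ ‖x i‖ * ‖wstar - v‖ := abs_real_inner_le_norm _ _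
    _ ≤ 1 * δ := by
        rw [hδdef, norm_sub_rev v wstar]
        exact mul_le_mul_of_nonneg_right (hx i) (norm_nonneg _)
    _ = δ := one_mul _
  have hpt : ∀ i, a / b * (φ (s i) - φ (t i)) ^ 2 - b^2 * D * δ ≤ c i * ⟪x i, w - v⟫ := by
    intro i
    have hsplit : ⟪x i, w - v⟫ = (s i - t i) + ⟪x i, wstar - v⟫ := by
      rw [show w - v = (w - wstar) + (wstar - v) by abel, inner_add_right, inner_sub_right]
      simp [hs, ht, real_inner_comm, mul_comm]
    rw [hsplit, mul_add, hc]
    have h1 : a / b * (φ (s i) - φ (t i)) ^ 2 ≤ g (s i) * (φ (s i) - y i) * (s i - t i) := by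
      rw [hy i]; exact key1 (s i) (t i)
    have h2 : -(b^2 * D * δ) ≤ g (s i) * (φ (s i) - y i) * ⟪x i, wstar - v⟫ := by
      have habs : |g (s i) * (φ (s i) - y i) * ⟪x i, wstar - v⟫| ≤ b^2 * D * δ := by
        rw [abs_mul, abs_mul, hy i]
        have e1 : |g (s i)| ≤ b := keyg _
        have e2 : |φ (s i) - φ (t i)| ≤ b * D := by
          calc |φ (s i) - φ (t i)| ≤ b * |s i - t i| := key2 _ _
          _ ≤ b * D := mul_le_mul_of_nonneg_left (hst i) hb.le
        calc |g (s i)| * |φ (s i) - φ (t i)| * |⟪x i, wstar - v⟫|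
            ≤ b * (b * D) * δ := by
              apply mul_le_mul (mul_le_mul e1 e2 (abs_nonneg _) hb.le) (hxv i) (abs_nonneg _)
              positivity
        _ = b^2 * D * δ := by ring
      linarith [neg_abs_le (g (s i) * (φ (s i) - y i) * ⟪x i, wstar - v⟫), habs]
    linarith
  have hsum : ∑ i, (a / b * (φ (s i) - φ (t i)) ^ 2 - b^2 * D * δ)
      ≤ ∑ i, c i * ⟪x i, w - v⟫ := Finset.sum_le_sum fun i _ => hpt i
  have hsum2 : ∑ i, (a / b * (φ (s i) - φ (t i)) ^ 2 - b^2 * D * δ)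
      = a / b * ∑ i, (y i - φ (s i)) ^ 2 - m * (b^2 * D * δ) := by
    rw [Finset.sum_sub_distrib, Finset.sum_const, Finset.card_univ, Fintype.card_fin,
      nsmul_eq_mul, Finset.mul_sum]
    congr 1
    apply Finset.sum_congr rfl
    intro i _
    rw [hy i]; ring
  have herr' : (m:ℝ) * ε ≤ ∑ i, (y i - φ (s i)) ^ 2 := by
    have h := herr
    rw [ge_iff_le, one_div, inv_mul_eq_div, le_div_iff₀ hmR] at h
    linarith
  -- perturbation bound
  have hpert : (m:ℝ) * (b^2 * D * δ) ≤ (m:ℝ) * (b^2 * D * (ε * a / (2 * b ^ 3 * W))) := by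
    apply mul_le_mul_of_nonneg_left _ hmR.le
    exact mul_le_mul_of_nonneg_left hv (by positivity)
  have hmain : a / b * ((m:ℝ) * ε) ≤ a / b * ∑ i, (y i - φ (s i)) ^ 2 :=
    mul_le_mul_of_nonneg_left herr' (by positivity)
  have hfinal : a / b * ((m:ℝ) * ε) - (m:ℝ) * (b^2 * D * (ε * a / (2 * b ^ 3 * W)))
      ≤ ∑ i, c i * ⟪x i, w - v⟫ := by
    rw [hsum2] at hsum
    linarith
  have hRHS : (2 / (m:ℝ)) * (a / b * ((m:ℝ) * ε) - (m:ℝ) * (b^2 * D * (ε * a / (2 * b ^ 3 * W))))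
      = (a / b) * ε * (2 - D / W) := by
    field_simp
  calc (a / b) * ε * (2 - D / W)
      = (2 / (m:ℝ)) * (a / b * ((m:ℝ) * ε) - (m:ℝ) * (b^2 * D * (ε * a / (2 * b ^ 3 * W)))) :=
        hRHS.symm
    _ ≤ (2 / (m:ℝ)) * ∑ i, c i * ⟪x i, w - v⟫ :=
        mul_le_mul_of_nonneg_left hfinal (by positivity)
end

section
/- For the standard ReLU idealized GLM, if ê(w) restricted to samples with ⟨w, xᵢ⟩ > 0 is at least ε, then for every v with ‖v - w*‖ ≤ ε/(2b²W), the subgradient G satisfies ⟨G(w), w - v⟩ ≥ ε·(2 - ‖w - w*‖/W) ≥ 0, i.e. ê is (ε, 2b²W, w*)-SLQC. -/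
open RealInnerProductSpace

private lemma glm_term_aux (b ε W D a astar s : ℝ) (hb : 0 < b) (hW : 0 < W)
    (hε : 0 < ε) (hD : 0 ≤ D) (haD : |a - astar| ≤ D)
    (hs : |s| ≤ ε / (2 * b ^ 2 * W)) :
    (if 0 ≤ a then b else 0) *
        ((if 0 ≤ a then b * a else 0) - (if 0 ≤ astar then b * astar else 0)) *
        ((a - astar) + s)
      ≥ (if 0 < a then
            ((if 0 ≤ astar then b * astar else 0) - (if 0 ≤ a then b * a else 0)) ^ 2
          else 0) - ε * D / (2 * W) := by
  have hεW : 0 ≤ ε / (2 * b ^ 2 * W) := by positivity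
  have hDs : ε * D / (2 * W) = b ^ 2 * D * (ε / (2 * b ^ 2 * W)) := by
    field_simp
  have hb2 : (0:ℝ) ≤ b ^ 2 := sq_nonneg b
  have hbig : 0 ≤ b ^ 2 * D * (ε / (2 * b ^ 2 * W)) :=
    mul_nonneg (mul_nonneg hb2 hD) hεW
  rw [hDs]
  have hs1 : -(ε / (2 * b ^ 2 * W)) ≤ s := (abs_le.mp hs).1
  have hs2 : s ≤ ε / (2 * b ^ 2 * W) := (abs_le.mp hs).2
  have ha1 : -D ≤ a - astar := (abs_le.mp haD).1
  have ha2 : a - astar ≤ D := (abs_le.mp haD).2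
  by_cases h1 : 0 ≤ a
  · by_cases h2 : 0 ≤ astar
    · simp only [h1, h2, if_true]
      have hkey1 : b ^ 2 * (a - astar) * s ≥ -(b ^ 2 * D * (ε / (2 * b ^ 2 * W))) := by
        have h5 : |b ^ 2 * (a - astar) * s| ≤ b ^ 2 * D * (ε / (2 * b ^ 2 * W)) := by
          rw [abs_mul, abs_mul, abs_of_nonneg hb2]
          have := mul_le_mul haD hs (abs_nonneg s) hD
          nlinarith
        linarith [(abs_le.mp h5).1]
      by_cases h3 : 0 < a <;> simp only [h3, if_true, if_false]
      · nlinarith [sq_nonneg (a - astar)]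
      · have ha0 : a = 0 := le_antisymm (not_lt.mp h3) h1
        subst ha0
        nlinarith [sq_nonneg astar]
    · simp only [h1, if_true, h2, if_false]
      have h2' : astar < 0 := not_le.mp h2
      have haa : a ≤ D := by linarith
      have hkey2 : b ^ 2 * a * s ≥ -(b ^ 2 * D * (ε / (2 * b ^ 2 * W))) := by
        have h5 : |b ^ 2 * a * s| ≤ b ^ 2 * D * (ε / (2 * b ^ 2 * W)) := by
          rw [abs_mul, abs_mul, abs_of_nonneg hb2, abs_of_nonneg h1]
          have := mul_le_mul haa hs (abs_nonneg s) hD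
          nlinarith
        linarith [(abs_le.mp h5).1]
      have hpos : 0 ≤ b ^ 2 * a * (-astar) := by
        apply mul_nonneg (mul_nonneg hb2 h1); linarith
      by_cases h3 : 0 < a <;> simp only [h3, if_true, if_false]
      · nlinarith
      · have ha0 : a = 0 := le_antisymm (not_lt.mp h3) h1
        subst ha0
        nlinarith
  · simp only [h1, if_false]
    have h3 : ¬ (0 < a) := fun h => h1 h.le
    simp only [h3, if_false]
    nlinarith

theorem glm_reLU_slqc (d m : ℕ) (hm : 0 < m) (b W ε : ℝ)
    (hb : 0 < b) (hW : 0 < W) (hε : 0 < ε)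
    (φ g : ℝ → ℝ)
    (hφ : ∀ t, φ t = if 0 ≤ t then b * t else 0)
    (hg : ∀ t, g t = if 0 ≤ t then b else 0)
    (x : Fin m → EuclideanSpace ℝ (Fin d)) (hx : ∀ i, ‖x i‖ ≤ 1)
    (wstar w : EuclideanSpace ℝ (Fin d)) (hwstar : ‖wstar‖ ≤ W) (hw : ‖w‖ ≤ W)
    (y : Fin m → ℝ) (hy : ∀ i, y i = φ ⟪wstar, x i⟫)
    (herr : (1 / (m : ℝ)) *
      ∑ i, (if 0 < ⟪w, x i⟫ then (y i - φ ⟪w, x i⟫) ^ 2 else 0) ≥ ε)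
    (v : EuclideanSpace ℝ (Fin d)) (hv : ‖v - wstar‖ ≤ ε / (2 * b ^ 2 * W)) :
    ⟪(2 / (m : ℝ)) • ∑ i, (g ⟪w, x i⟫ * (φ ⟪w, x i⟫ - y i)) • x i, w - v⟫
      ≥ ε * (2 - ‖w - wstar‖ / W) ∧
    ε * (2 - ‖w - wstar‖ / W) ≥ 0 := by
  have hm' : (0:ℝ) < m := by exact_mod_cast hm
  set D := ‖w - wstar‖ with hDdef
  have hD : 0 ≤ D := norm_nonneg _
  have hD2W : D ≤ 2 * W := by
    calc D ≤ ‖w‖ + ‖wstar‖ := norm_sub_le _ _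
    _ ≤ 2 * W := by linarith
  constructor
  · -- rewrite inner product as a sum
    have hip : ⟪(2 / (m : ℝ)) • ∑ i, (g ⟪w, x i⟫ * (φ ⟪w, x i⟫ - y i)) • x i, w - v⟫
        = (2 / (m : ℝ)) * ∑ i, (g ⟪w, x i⟫ * (φ ⟪w, x i⟫ - y i)) * ⟪x i, w - v⟫ := by
      rw [real_inner_smul_left, sum_inner]
      congr 1
      exact Finset.sum_congr rfl fun i _ => real_inner_smul_left _ _ _
    rw [hip]
    -- per-term lower bound
    have hterm : ∀ i, (g ⟪w, x i⟫ * (φ ⟪w, x i⟫ - y i)) * ⟪x i, w - v⟫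
        ≥ (if 0 < ⟪w, x i⟫ then (y i - φ ⟪w, x i⟫) ^ 2 else 0) - ε * D / (2 * W) := by
      intro i
      have hsplit : ⟪x i, w - v⟫ = (⟪w, x i⟫ - ⟪wstar, x i⟫) + ⟪x i, wstar - v⟫ := by
        have : w - v = (w - wstar) + (wstar - v) := by abel
        rw [this, inner_add_right, inner_sub_right, real_inner_comm (x i) w,
          real_inner_comm (x i) wstar]
      have haD : |⟪w, x i⟫ - ⟪wstar, x i⟫| ≤ D := by
        have h1 : ⟪w, x i⟫ - ⟪wstar, x i⟫ = ⟪w - wstar, x i⟫ := by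
          rw [inner_sub_left]
        rw [h1]
        calc |⟪w - wstar, x i⟫| ≤ ‖w - wstar‖ * ‖x i‖ := abs_real_inner_le_norm _ _
        _ ≤ D * 1 := mul_le_mul_of_nonneg_left (hx i) hD
        _ = D := mul_one _
      have hs : |⟪x i, wstar - v⟫| ≤ ε / (2 * b ^ 2 * W) := by
        calc |⟪x i, wstar - v⟫| ≤ ‖x i‖ * ‖wstar - v‖ := abs_real_inner_le_norm _ _
        _ ≤ 1 * ‖wstar - v‖ := mul_le_mul_of_nonneg_right (hx i) (norm_nonneg _)
        _ = ‖v - wstar‖ := by rw [one_mul, norm_sub_rev]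
        _ ≤ ε / (2 * b ^ 2 * W) := hv
      rw [hsplit, hy i, hg ⟪w, x i⟫, hφ ⟪w, x i⟫, hφ ⟪wstar, x i⟫]
      exact glm_term_aux b ε W D ⟪w, x i⟫ ⟪wstar, x i⟫ ⟪x i, wstar - v⟫
        hb hW hε hD haD hs
    have hsum : ∑ i, (g ⟪w, x i⟫ * (φ ⟪w, x i⟫ - y i)) * ⟪x i, w - v⟫
        ≥ ∑ i, ((if 0 < ⟪w, x i⟫ then (y i - φ ⟪w, x i⟫) ^ 2 else 0) - ε * D / (2 * W)) :=
      Finset.sum_le_sum fun i _ => hterm i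
    have hS : (m : ℝ) * ε ≤ ∑ i, (if 0 < ⟪w, x i⟫ then (y i - φ ⟪w, x i⟫) ^ 2 else 0) := by
      have h := herr
      rw [ge_iff_le, one_div, inv_mul_eq_div, le_div_iff₀ hm'] at h
      linarith
    have hsum2 : ∑ i, ((if 0 < ⟪w, x i⟫ then (y i - φ ⟪w, x i⟫) ^ 2 else 0)
        - ε * D / (2 * W))
        = (∑ i, (if 0 < ⟪w, x i⟫ then (y i - φ ⟪w, x i⟫) ^ 2 else 0))
          - m * (ε * D / (2 * W)) := by
      rw [Finset.sum_sub_distrib, Finset.sum_const, Finset.card_fin, nsmul_eq_mul]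
    have hfinal : ∑ i, (g ⟪w, x i⟫ * (φ ⟪w, x i⟫ - y i)) * ⟪x i, w - v⟫
        ≥ m * ε - m * (ε * D / (2 * W)) := by
      rw [hsum2] at hsum
      linarith
    have h2m : (0:ℝ) < 2 / m := by positivity
    calc (2 / (m:ℝ)) * ∑ i, (g ⟪w, x i⟫ * (φ ⟪w, x i⟫ - y i)) * ⟪x i, w - v⟫
        ≥ (2 / m) * (m * ε - m * (ε * D / (2 * W))) :=
          mul_le_mul_of_nonneg_left hfinal h2m.le
      _ = ε * (2 - D / W) := by field_simp
  · have hDW : D / W ≤ 2 := by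
      rw [div_le_iff₀ hW]; linarith
    nlinarith
end
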